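/- Let P̃ be the pushforward of P under the map x ↦ aUx + b, where U is a unitary operator on H, a ≠ 0 is a real scalar, and b ∈ H. Then the population trimmed covariance operator satisfies C(P̃) = a² U∘C(P)∘U*, where U* is the adjoint of U. -/

import Mathlib

open MeasureTheory
open scoped RealInnerProductSpace
open scoped Pointwise

/-- `F_P(t; v) = P(‖X − v‖ ≤ t)`. -/
noncomputable def Fpop {H : Type*} [NormedAddCommGroup H] [MeasurableSpace H]
    (P : Measure H) (t : ℝ) (v : H) : ℝ :=
  (P {x | ‖x - v‖ ≤ t}).toReal

/-- The α-radius `r_P(v) = inf {t ≥ 0 : F_P(t; v) ≥ α}`. -/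
noncomputable def rpop {H : Type*} [NormedAddCommGroup H] [MeasurableSpace H]
    (α : ℝ) (P : Measure H) (v : H) : ℝ :=
  sInf {t : ℝ | 0 ≤ t ∧ α ≤ Fpop P t v}

/-- `G_P(t) = P(r_P(X) ≤ t)`. -/
noncomputable def Gpop {H : Type*} [NormedAddCommGroup H] [MeasurableSpace H]
    (α : ℝ) (P : Measure H) (t : ℝ) : ℝ :=
  (P {x | rpop α P x ≤ t}).toReal

/-- The population weight function `w_P(v) = g(G_P(r_P(v)))`. -/
noncomputable def wpop {H : Type*} [NormedAddCommGroup H] [MeasurableSpace H]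
    (g : ℝ → ℝ) (α : ℝ) (P : Measure H) (v : H) : ℝ :=
  g (Gpop α P (rpop α P v))

/-- The population trimmed mean `μ(P) = E_P[w_P(X)X] / E_P[w_P(X)]`. -/
noncomputable def meanPop {H : Type*} [NormedAddCommGroup H] [InnerProductSpace ℝ H]
    [CompleteSpace H] [MeasurableSpace H] (g : ℝ → ℝ) (α : ℝ) (P : Measure H) : H :=
  (∫ x, wpop g α P x ∂P)⁻¹ • ∫ x, wpop g α P x • x ∂P

/-- The population trimmed covariance operator
`C(P)(h) = E_P[w_P(X)⟨X − μ(P), h⟩(X − μ(P))] / E_P[w_P(X)]`. -/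
noncomputable def covPop {H : Type*} [NormedAddCommGroup H] [InnerProductSpace ℝ H]
    [CompleteSpace H] [MeasurableSpace H] (g : ℝ → ℝ) (α : ℝ) (P : Measure H) (h : H) : H :=
  (∫ x, wpop g α P x ∂P)⁻¹ •
    ∫ x, (wpop g α P x * ⟪x - meanPop g α P, h⟫) • (x - meanPop g α P) ∂P

set_option linter.unusedSectionVars false
section Aux

variable {H : Type*} [NormedAddCommGroup H] [MeasurableSpace H]
  (P : Measure H) [IsProbabilityMeasure P]

lemma Fpop_nonneg (t : ℝ) (v : H) : 0 ≤ Fpop P t v := ENNReal.toReal_nonneg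

lemma Fpop_le_one (t : ℝ) (v : H) : Fpop P t v ≤ 1 := by
  have := prob_le_one (μ := P) (s := {x | ‖x - v‖ ≤ t})
  simpa [Fpop] using ENNReal.toReal_mono ENNReal.one_ne_top this

lemma Fpop_mono (v : H) {t t' : ℝ} (h : t ≤ t') : Fpop P t v ≤ Fpop P t' v := by
  apply ENNReal.toReal_mono (measure_ne_top _ _)
  exact measure_mono fun x hx => le_trans hx h

lemma exists_Fpop_ge (v : H) {c : ℝ} (hc : c < 1) : ∃ t, 0 ≤ t ∧ c ≤ Fpop P t v := by
  have hmono : Monotone (fun n : ℕ => {x : H | ‖x - v‖ ≤ n}) := by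
    intro m n hmn x hx
    exact hx.trans ((Nat.cast_le (α := ℝ)).mpr hmn)
  have hU : ⋃ n : ℕ, {x : H | ‖x - v‖ ≤ n} = Set.univ := by
    ext x
    simp only [Set.mem_iUnion, Set.mem_univ, iff_true, Set.mem_setOf_eq]
    obtain ⟨n, hn⟩ := exists_nat_ge ‖x - v‖
    exact ⟨n, hn⟩
  have h1 := tendsto_measure_iUnion_atTop (μ := P) hmono
  rw [hU, measure_univ] at h1
  have h2 : Filter.Tendsto (fun n : ℕ => Fpop P n v) Filter.atTop (nhds 1) := by
    have := (ENNReal.tendsto_toReal ENNReal.one_ne_top).comp h1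
    simpa [Fpop, Function.comp_def] using this
  have hev : ∀ᶠ n : ℕ in Filter.atTop, c < Fpop P n v :=
    h2.eventually (eventually_gt_nhds hc)
  obtain ⟨n, hn⟩ := hev.exists
  replace hn := hn.le
  exact ⟨n, Nat.cast_nonneg n, hn⟩

lemma rpop_nonneg (α : ℝ) (v : H) : 0 ≤ rpop α P v :=
  Real.sInf_nonneg fun _ ht => ht.1

lemma rpop_le {α : ℝ} (v : H) {t : ℝ} (h0 : 0 ≤ t) (h : α ≤ Fpop P t v) :
    rpop α P v ≤ t :=
  csInf_le ⟨0, fun _ hs => hs.1⟩ ⟨h0, h⟩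

lemma le_rpop {α : ℝ} (hα1 : α < 1) (v : H) {s : ℝ}
    (h : ∀ t, 0 ≤ t → α ≤ Fpop P t v → s ≤ t) : s ≤ rpop α P v := by
  obtain ⟨t, ht0, htc⟩ := exists_Fpop_ge P v hα1
  exact le_csInf ⟨t, ht0, htc⟩ fun u hu => h u hu.1 hu.2



lemma rpop_lipschitz {α : ℝ} (hα1 : α < 1) : LipschitzWith 1 (rpop α P) := by
  have key : ∀ v v' : H, rpop α P v' ≤ rpop α P v + ‖v - v'‖ := by
    intro v v'
    obtain ⟨t, ht0, htc⟩ := exists_Fpop_ge P v hα1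
    have hne : Set.Nonempty {t : ℝ | 0 ≤ t ∧ α ≤ Fpop P t v} := ⟨t, ht0, htc⟩
    have h1 : ∀ s ∈ {t : ℝ | 0 ≤ t ∧ α ≤ Fpop P t v}, rpop α P v' ≤ s + ‖v - v'‖ := by
      intro s hs
      apply rpop_le P v' (add_nonneg hs.1 (norm_nonneg _))
      refine le_trans hs.2 ?_
      apply ENNReal.toReal_mono (measure_ne_top _ _)
      apply measure_mono
      intro x hx
      calc ‖x - v'‖ ≤ ‖x - v‖ + ‖v - v'‖ := by
            simpa using norm_add_le (x - v) (v - v')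
        _ ≤ s + ‖v - v'‖ := by
            have hx' : ‖x - v‖ ≤ s := hx
            linarith
    have : rpop α P v' - ‖v - v'‖ ≤ rpop α P v :=
      le_csInf hne fun s hs => by linarith [h1 s hs]
    linarith
  rw [lipschitzWith_iff_dist_le_mul]
  intro v v'
  simp only [NNReal.coe_one, one_mul]
  rw [Real.dist_eq, abs_sub_le_iff]
  constructor
  · have := key v' v
    rw [dist_eq_norm] at *
    rw [norm_sub_rev v' v] at this
    linarith
  · have := key v v'
    rw [dist_eq_norm] at *
    linarith

lemma Gpop_nonneg (α t : ℝ) : 0 ≤ Gpop α P t := ENNReal.toReal_nonneg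

lemma Gpop_le_one (α t : ℝ) : Gpop α P t ≤ 1 := by
  have := prob_le_one (μ := P) (s := {x | rpop α P x ≤ t})
  simpa [Gpop] using ENNReal.toReal_mono ENNReal.one_ne_top this

lemma Gpop_mono (α : ℝ) {t t' : ℝ} (h : t ≤ t') : Gpop α P t ≤ Gpop α P t' := by
  apply ENNReal.toReal_mono (measure_ne_top _ _)
  exact measure_mono fun x hx => le_trans hx h

lemma Gpop_mem (α t : ℝ) : Gpop α P t ∈ Set.Icc (0:ℝ) 1 :=
  ⟨Gpop_nonneg P α t, Gpop_le_one P α t⟩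

lemma wpop_measurable [BorelSpace H] {g : ℝ → ℝ} {α : ℝ} (hα1 : α < 1)
    (hg_mono : AntitoneOn g (Set.Icc (0 : ℝ) 1)) : Measurable (wpop g α P) := by
  have h1 : Antitone (fun t => g (Gpop α P t)) := fun t t' h =>
    hg_mono (Gpop_mem P α t) (Gpop_mem P α t') (Gpop_mono P α h)
  exact h1.measurable.comp (rpop_lipschitz P hα1).continuous.measurable

lemma wpop_nonneg {g : ℝ → ℝ} {α : ℝ}
    (hg_nonneg : ∀ t ∈ Set.Icc (0 : ℝ) 1, 0 ≤ g t) (x : H) : 0 ≤ wpop g α P x :=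
  hg_nonneg _ (Gpop_mem P α _)

lemma wpop_le_sSup {g : ℝ → ℝ} {α : ℝ}
    (hg_bdd : BddAbove (g '' Set.Icc (0 : ℝ) 1)) (x : H) :
    wpop g α P x ≤ sSup (g '' Set.Icc (0 : ℝ) 1) :=
  le_csSup hg_bdd ⟨_, Gpop_mem P α _, rfl⟩

/-- The weight vanishes far from the origin. -/
lemma wpop_support [OpensMeasurableSpace H] {g : ℝ → ℝ} {α β : ℝ} (hα : 0 < α) (hα' : α ≤ 1 / 2) (hβ : 0 < β)
    (hg_zero : ∀ t ∈ Set.Icc (0 : ℝ) 1, 1 - β ≤ t → g t = 0) :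
    ∃ R : ℝ, 0 ≤ R ∧ ∀ x : H, R ≤ ‖x‖ → wpop g α P x = 0 := by
  have hα1 : α < 1 := lt_of_le_of_lt hα' (by norm_num)
  -- choose t1 with mass ≥ max α (1 - β) around 0
  obtain ⟨t1, ht10, ht1⟩ := exists_Fpop_ge P (0 : H) (c := max α (1 - β))
    (max_lt hα1 (by linarith))
  -- choose t0 with mass > 1 - α around 0
  obtain ⟨t0, ht00, ht0⟩ := exists_Fpop_ge P (0 : H) (c := 1 - α / 2) (by linarith)
  have ht0' : 1 - α < Fpop P t0 0 := by linarith
  refine ⟨t0 + 2 * t1, by linarith, fun x hx => ?_⟩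
  -- lower bound on rpop: rpop α P x ≥ ‖x‖ - t0
  have hlow : ‖x‖ - t0 ≤ rpop α P x := by
    apply le_rpop P hα1
    intro t ht0t hFt
    by_contra hcon
    push_neg at hcon
    -- balls are disjoint
    have hsub : {y : H | ‖y - x‖ ≤ t} ⊆ {y : H | ‖y - 0‖ ≤ t0}ᶜ := by
      intro y hy hy'
      have h1 : ‖y - x‖ ≤ t := hy
      have h2 : ‖y‖ ≤ t0 := by simpa using hy'
      have : ‖x‖ ≤ t + t0 := by
        calc ‖x‖ = ‖(y - 0) - (y - x)‖ := by rw [sub_zero, sub_sub_cancel]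
          _ ≤ ‖y - 0‖ + ‖y - x‖ := norm_sub_le _ _
          _ ≤ t0 + t := by rw [sub_zero]; exact add_le_add h2 h1
          _ = t + t0 := by ring
      linarith
    have hmeas : MeasurableSet {y : H | ‖y - 0‖ ≤ t0} := by
      have : IsClosed {y : H | ‖y - 0‖ ≤ t0} :=
        isClosed_le (by continuity) continuous_const
      exact this.measurableSet
    have hle : Fpop P t x ≤ 1 - Fpop P t0 0 := by
      have h1 : P {y : H | ‖y - x‖ ≤ t} ≤ P {y : H | ‖y - 0‖ ≤ t0}ᶜ := measure_mono hsub
      have h2 : (P {y : H | ‖y - 0‖ ≤ t0}ᶜ).toReal = 1 - Fpop P t0 0 := by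
        rw [measure_compl hmeas (measure_ne_top _ _), measure_univ]
        rw [ENNReal.toReal_sub_of_le (prob_le_one) ENNReal.one_ne_top]
        simp [Fpop]
      calc Fpop P t x ≤ (P {y : H | ‖y - 0‖ ≤ t0}ᶜ).toReal :=
            ENNReal.toReal_mono (measure_ne_top _ _) h1
        _ = 1 - Fpop P t0 0 := h2
    have : α ≤ 1 - Fpop P t0 0 := le_trans hFt hle
    linarith
  -- upper bound on rpop in general: rpop α P y ≤ ‖y‖ + t1
  have hup : ∀ y : H, rpop α P y ≤ ‖y‖ + t1 := by
    intro y
    apply rpop_le P y (by positivity)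
    refine le_trans (le_trans (le_max_left α (1 - β)) ht1) ?_
    apply ENNReal.toReal_mono (measure_ne_top _ _)
    apply measure_mono
    intro z hz
    have hz' : ‖z‖ ≤ t1 := by simpa using hz
    have : ‖z - y‖ ≤ ‖z‖ + ‖y‖ := norm_sub_le _ _
    simp only [Set.mem_setOf_eq]
    linarith
  -- G at (‖x‖ - t0) is at least 1 - β
  have hG : 1 - β ≤ Gpop α P (rpop α P x) := by
    have h1 : Gpop α P (‖x‖ - t0) ≤ Gpop α P (rpop α P x) := Gpop_mono P α hlow
    have h2 : Fpop P (‖x‖ - t0 - t1) 0 ≤ Gpop α P (‖x‖ - t0) := by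
      apply ENNReal.toReal_mono (measure_ne_top _ _)
      apply measure_mono
      intro z hz
      have hz' : ‖z‖ ≤ ‖x‖ - t0 - t1 := by simpa using hz
      have := hup z
      simp only [Set.mem_setOf_eq]
      linarith
    have h3 : Fpop P t1 0 ≤ Fpop P (‖x‖ - t0 - t1) 0 := Fpop_mono P 0 (by linarith)
    have h4 : 1 - β ≤ Fpop P t1 0 := le_trans (le_max_right _ _) ht1
    linarith
  exact hg_zero _ (Gpop_mem P α _) hG

/-- Integrability of weighted integrands. -/
lemma integrable_wpop_smul [BorelSpace H] {E : Type*} [NormedAddCommGroup E] [NormedSpace ℝ E]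
    {g : ℝ → ℝ} {α β : ℝ} (hα : 0 < α) (hα' : α ≤ 1 / 2) (hβ : 0 < β)
    (hg_nonneg : ∀ t ∈ Set.Icc (0 : ℝ) 1, 0 ≤ g t)
    (hg_bdd : BddAbove (g '' Set.Icc (0 : ℝ) 1))
    (hg_mono : AntitoneOn g (Set.Icc (0 : ℝ) 1))
    (hg_zero : ∀ t ∈ Set.Icc (0 : ℝ) 1, 1 - β ≤ t → g t = 0)
    (F : H → E) (hF : AEStronglyMeasurable F P)
    {R : ℝ} (hR : 0 ≤ R) (hRsupp : ∀ x : H, R ≤ ‖x‖ → wpop g α P x = 0)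
    {C : ℝ} (hC : ∀ x : H, ‖x‖ ≤ R → ‖F x‖ ≤ C) :
    Integrable (fun x => wpop g α P x • F x) P := by
  have hα1 : α < 1 := lt_of_le_of_lt hα' (by norm_num)
  set M := sSup (g '' Set.Icc (0 : ℝ) 1) with hM
  have hM0 : 0 ≤ M := le_trans (wpop_nonneg P (α := α) hg_nonneg (0:H)) (wpop_le_sSup P (α := α) hg_bdd 0)
  have hC0 : 0 ≤ C := le_trans (norm_nonneg _) (hC 0 (by simpa using hR))
  have hmeas : AEStronglyMeasurable (fun x => wpop g α P x • F x) P :=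
    ((wpop_measurable P hα1 hg_mono).aestronglyMeasurable.smul hF)
  apply Integrable.mono' (integrable_const (M * C)) hmeas
  filter_upwards with x
  rcases le_or_gt ‖x‖ R with hx | hx
  · have h1 : ‖wpop g α P x • F x‖ = wpop g α P x * ‖F x‖ := by
      rw [norm_smul, Real.norm_of_nonneg (wpop_nonneg P hg_nonneg x)]
    rw [h1]
    exact mul_le_mul (wpop_le_sSup P hg_bdd x) (hC x hx) (norm_nonneg _) hM0
  · rw [hRsupp x hx.le]
    simpa using mul_nonneg hM0 hC0

end Aux

set_option maxHeartbeats 1000000 in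
/-- If `P̃` is the pushforward of `P` under `x ↦ a • U x + b` with `U`
unitary, `a ≠ 0`, `b ∈ H`, then the population trimmed covariance operator satisfies
`C(P̃) = a² U ∘ C(P) ∘ U*`, where `U*` is the adjoint of `U`. -/
theorem covPop_equivariance
    {H : Type*} [NormedAddCommGroup H] [InnerProductSpace ℝ H] [CompleteSpace H]
    [SecondCountableTopology H] [MeasurableSpace H] [BorelSpace H]
    (P : Measure H) [IsProbabilityMeasure P]
    (α β : ℝ) (hα : 0 < α) (hα' : α ≤ 1 / 2) (hβ : 0 < β) (hβ' : β ≤ 1 / 2)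
    (g : ℝ → ℝ)
    (hg_nonneg : ∀ t ∈ Set.Icc (0 : ℝ) 1, 0 ≤ g t)
    (hg_bdd : BddAbove (g '' Set.Icc (0 : ℝ) 1))
    (hg_mono : AntitoneOn g (Set.Icc (0 : ℝ) 1))
    (hg_pos : ∀ t ∈ Set.Icc (0 : ℝ) 1, t < 1 - β → 0 < g t)
    (hg_zero : ∀ t ∈ Set.Icc (0 : ℝ) 1, 1 - β ≤ t → g t = 0)
    (hE : 0 < ∫ x, wpop g α P x ∂P)
    (U : H ≃ₗᵢ[ℝ] H) (a : ℝ) (ha : a ≠ 0) (b : H)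
    (Pt : Measure H) (hPt : Pt = Measure.map (fun x => a • U x + b) P) :
    ∀ h : H,
      covPop g α Pt h =
        a ^ 2 •
          U (covPop g α P
            (ContinuousLinearMap.adjoint U.toLinearIsometry.toContinuousLinearMap h)) := by
  intro h
  have hα1 : α < 1 := lt_of_le_of_lt hα' (by norm_num)
  have ha' : 0 < |a| := abs_pos.mpr ha
  set A : H →L[ℝ] H := U.toLinearIsometry.toContinuousLinearMap with hA
  set k : H := ContinuousLinearMap.adjoint A h with hk
  set μ : H := meanPop g α P with hμ
  set c : ℝ := ∫ x, wpop g α P x ∂P with hc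
  have hc0 : c ≠ 0 := ne_of_gt hE
  set e : H ≃ᵐ H := (U.toHomeomorph.trans ((Homeomorph.smulOfNeZero a ha).trans
      (Homeomorph.addRight b))).toMeasurableEquiv with he
  have hPe : Pt = Measure.map e P := hPt
  have hPtapp : ∀ s : Set H, Pt s = P (e ⁻¹' s) := by
    intro s; rw [hPe]; exact MeasurableEquiv.map_apply e s
  -- transfer of Fpop
  have hF : ∀ (t : ℝ) (v : H), Fpop Pt t (a • U v + b) = Fpop P (t / |a|) v := by
    intro t v
    unfold Fpop
    rw [hPtapp]
    have hAB : (⇑e ⁻¹' {x : H | ‖x - (a • U v + b)‖ ≤ t}) = {x : H | ‖x - v‖ ≤ t / |a|} := by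
      ext x
      simp only [Set.mem_preimage, Set.mem_setOf_eq]
      have hex : (e x : H) = a • U x + b := rfl
      rw [hex, add_sub_add_right_eq_sub, ← smul_sub, ← map_sub U x v, norm_smul,
        Real.norm_eq_abs, LinearIsometryEquiv.norm_map]
      rw [le_div_iff₀ ha', mul_comm]
    rw [hAB]
  -- transfer of rpop
  have hr : ∀ v : H, rpop α Pt (a • U v + b) = |a| * rpop α P v := by
    intro v
    have hset : {t : ℝ | 0 ≤ t ∧ α ≤ Fpop Pt t (a • U v + b)} =
        |a| • {t : ℝ | 0 ≤ t ∧ α ≤ Fpop P t v} := by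
      ext t
      rw [Set.mem_smul_set_iff_inv_smul_mem₀ (ne_of_gt ha')]
      simp only [Set.mem_setOf_eq, smul_eq_mul]
      rw [hF t v]
      constructor
      · rintro ⟨h1, h2⟩
        exact ⟨by positivity, by rwa [inv_mul_eq_div]⟩
      · rintro ⟨h1, h2⟩
        refine ⟨?_, by rwa [← inv_mul_eq_div]⟩
        have h0 : 0 ≤ |a| * (|a|⁻¹ * t) := mul_nonneg ha'.le h1
        rwa [← mul_assoc, mul_inv_cancel₀ (ne_of_gt ha'), one_mul] at h0
    unfold rpop
    rw [hset, Real.sInf_smul_of_nonneg (abs_nonneg a), smul_eq_mul]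
  -- transfer of Gpop
  have hG : ∀ s : ℝ, Gpop α Pt (|a| * s) = Gpop α P s := by
    intro s
    unfold Gpop
    rw [hPtapp]
    have hAB : (⇑e ⁻¹' {x : H | rpop α Pt x ≤ |a| * s}) = {x : H | rpop α P x ≤ s} := by
      ext v
      simp only [Set.mem_preimage, Set.mem_setOf_eq]
      have hev : rpop α Pt (e v) = |a| * rpop α P v := hr v
      rw [hev]
      exact mul_le_mul_iff_right₀ ha'
    rw [hAB]
  -- transfer of wpop
  have hw : ∀ x : H, wpop g α Pt (a • U x + b) = wpop g α P x := by
    intro x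
    unfold wpop
    rw [hr, hG]
  -- integrabilities
  obtain ⟨R, hR0, hRsupp⟩ := wpop_support P (g := g) hα hα' hβ hg_zero
  have Iw : Integrable (wpop g α P) P := by
    have := integrable_wpop_smul P hα hα' hβ hg_nonneg hg_bdd hg_mono hg_zero
      (fun _ => (1:ℝ)) aestronglyMeasurable_const hR0 hRsupp (C := 1)
      (fun x _ => by simp)
    simpa using this
  have Iwx : Integrable (fun x => wpop g α P x • x) P := by
    exact integrable_wpop_smul P hα hα' hβ hg_nonneg hg_bdd hg_mono hg_zero
      (fun x => x) aestronglyMeasurable_id hR0 hRsupp (C := R) (fun x hx => hx)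
  have Icov : Integrable (fun x => (wpop g α P x * ⟪x - μ, k⟫) • (x - μ)) P := by
    have hFm : AEStronglyMeasurable (fun x : H => (⟪x - μ, k⟫ : ℝ) • (x - μ)) P := by
      apply Continuous.aestronglyMeasurable
      continuity
    have hCb : ∀ x : H, ‖x‖ ≤ R → ‖(⟪x - μ, k⟫ : ℝ) • (x - μ)‖ ≤
        ((R + ‖μ‖) * ‖k‖) * (R + ‖μ‖) := by
      intro x hx
      have h1 : ‖x - μ‖ ≤ R + ‖μ‖ := le_trans (norm_sub_le x μ) (by linarith)
      have h2 : |(⟪x - μ, k⟫ : ℝ)| ≤ ‖x - μ‖ * ‖k‖ := abs_real_inner_le_norm _ _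
      rw [norm_smul, Real.norm_eq_abs]
      have h3 : (0:ℝ) ≤ ‖x - μ‖ := norm_nonneg _
      have h4 : (0:ℝ) ≤ ‖k‖ := norm_nonneg _
      have h5 : (0:ℝ) ≤ R + ‖μ‖ := by linarith
      calc |(⟪x - μ, k⟫ : ℝ)| * ‖x - μ‖ ≤ (‖x - μ‖ * ‖k‖) * ‖x - μ‖ :=
            mul_le_mul_of_nonneg_right h2 h3
        _ ≤ ((R + ‖μ‖) * ‖k‖) * ‖x - μ‖ :=
            mul_le_mul_of_nonneg_right (mul_le_mul_of_nonneg_right h1 h4) h3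
        _ ≤ ((R + ‖μ‖) * ‖k‖) * (R + ‖μ‖) :=
            mul_le_mul_of_nonneg_left h1 (mul_nonneg h5 h4)
    have := integrable_wpop_smul P hα hα' hβ hg_nonneg hg_bdd hg_mono hg_zero
      (fun x : H => (⟪x - μ, k⟫ : ℝ) • (x - μ)) hFm hR0 hRsupp hCb
    simpa [mul_smul] using this
  -- transfer of total mass
  have hEw : ∫ x, wpop g α Pt x ∂Pt = c := by
    rw [hPe, integral_map_equiv, ← hPe, hc]
    exact integral_congr_ae (Filter.Eventually.of_forall fun x => hw x)
  -- transfer of the mean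
  have hmean : meanPop g α Pt = a • U μ + b := by
    have h2 : ∫ x, wpop g α Pt x • x ∂Pt = a • U (∫ x, wpop g α P x • x ∂P) + c • b := by
      rw [hPe, integral_map_equiv, ← hPe]
      have hfun : ∀ x : H, wpop g α Pt (e x) • (e x : H) =
          a • A (wpop g α P x • x) + wpop g α P x • b := by
        intro x
        have h3 : wpop g α Pt (e x) = wpop g α P x := hw x
        have h4 : (e x : H) = a • U x + b := rfl
        rw [h3, h4, smul_add]
        congr 1
        rw [_root_.map_smul, smul_comm]
        rfl
      simp only [hfun]
      have h5 : Integrable (fun x => a • A (wpop g α P x • x)) P :=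
        (A.integrable_comp Iwx).smul a
      have h6 : Integrable (fun x => wpop g α P x • b) P := Iw.smul_const b
      rw [integral_add h5 h6, integral_smul, A.integral_comp_comm Iwx,
        integral_smul_const]
      rfl
    unfold meanPop
    rw [hEw, h2, smul_add, smul_smul c⁻¹ c b, inv_mul_cancel₀ hc0, one_smul,
      smul_comm c⁻¹ a, ← _root_.map_smul U]
    rfl
  -- the covariance
  show (∫ x, wpop g α Pt x ∂Pt)⁻¹ •
      ∫ x, (wpop g α Pt x * ⟪x - meanPop g α Pt, h⟫) • (x - meanPop g α Pt) ∂Pt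
      = a ^ 2 • U (covPop g α P k)
  rw [hEw, hmean]
  rw [hPe, integral_map_equiv, ← hPe]
  have hpt : ∀ x : H, (wpop g α Pt (e x) * ⟪(e x : H) - (a • U μ + b), h⟫) •
      ((e x : H) - (a • U μ + b)) = a ^ 2 • A ((wpop g α P x * ⟪x - μ, k⟫) • (x - μ)) := by
    intro x
    have h3 : wpop g α Pt (e x) = wpop g α P x := hw x
    have h4 : (e x : H) - (a • U μ + b) = a • A (x - μ) := by
      show (a • U x + b) - (a • U μ + b) = a • A (x - μ)
      rw [add_sub_add_right_eq_sub, ← smul_sub]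
      congr 1
      exact (map_sub A x μ).symm
    rw [h3, h4, real_inner_smul_left]
    have h5 : (⟪A (x - μ), h⟫ : ℝ) = ⟪x - μ, k⟫ := by
      rw [hk]
      exact (ContinuousLinearMap.adjoint_inner_right A (x - μ) h).symm
    rw [h5, smul_smul, _root_.map_smul, smul_smul]
    congr 1
    ring
  simp only [hpt]
  rw [integral_smul, A.integral_comp_comm Icov]
  show c⁻¹ • a ^ 2 • A (∫ x, (wpop g α P x * ⟪x - μ, k⟫) • (x - μ) ∂P) =
    a ^ 2 • U (covPop g α P k)
  rw [smul_comm, ← _root_.map_smul A]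
  rfl
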